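/- For every L ∈ 𝐋, the linear space 𝒱(L) coincides with the cone generated by 𝐕(L): 𝒱(L) = {λV : λ ≥ 0, V ∈ 𝐕(L)}. -/

import Mathlib

open Matrix Filter Topology

/-- Square matrices of size `dT × dT`, indexed by blocks: index `(t, i)` is
row/column `i` within block `t`. -/
abbrev Mat (d T : ℕ) := Matrix (Fin T × Fin d) (Fin T × Fin d) ℝ

/-- The `t`-th diagonal `d × d` block of a `dT × dT` matrix. -/
def blk {d T : ℕ} (A : Mat d T) (t : Fin T) : Matrix (Fin d) (Fin d) ℝ :=
  fun i j => A (t, i) (t, j)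

/-- The `t`-th block column of a `dT × dT` matrix, a `dT × d` matrix. -/
def colBlk {d T : ℕ} (A : Mat d T) (t : Fin T) : Matrix (Fin T × Fin d) (Fin d) ℝ :=
  fun p j => A p (t, j)

/-- Membership in `𝐋`: block lower triangular matrices. -/
def memL {d T : ℕ} (A : Mat d T) : Prop :=
  ∀ (t s : Fin T) (i j : Fin d), t < s → A (t, i) (s, j) = 0

/-- Membership in `𝐎`: block diagonal matrices with orthogonal `d × d` diagonal blocks
(equivalently: block diagonal and orthogonal). -/
def memO {d T : ℕ} (O : Mat d T) : Prop :=
  (∀ (t s : Fin T) (i j : Fin d), t ≠ s → O (t, i) (s, j) = 0) ∧ Oᵀ * O = 1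

/-- The Frobenius norm of a real matrix. -/
noncomputable def frobNorm {m n : Type*} [Fintype m] [Fintype n] (A : Matrix m n ℝ) : ℝ :=
  Real.sqrt (∑ i, ∑ j, (A i j) ^ 2)

/-- The Frobenius inner product of two real matrices. -/
noncomputable def frobInner {m n : Type*} [Fintype m] [Fintype n] (A B : Matrix m n ℝ) : ℝ :=
  ∑ i, ∑ j, A i j * B i j

/-- The adapted Bures–Wasserstein distance `d_ABW(L, M) = inf_{O ∈ 𝐎} ‖L - M O‖_F`. -/
noncomputable def dABW {d T : ℕ} (L M : Mat d T) : ℝ :=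
  sInf {r : ℝ | ∃ O : Mat d T, memO O ∧ r = frobNorm (L - M * O)}

/-- The set `𝐎*(L, M)` of optimizers of `inf_{O ∈ 𝐎} ‖L - M O‖_F`. -/
noncomputable def OStar {d T : ℕ} (L M : Mat d T) : Set (Mat d T) :=
  {O | memO O ∧ frobNorm (L - M * O) = dABW L M}

/-- The set `𝐕(L) = {M P - L : M ∈ 𝐋, P ∈ 𝐎*(L, M)}`. -/
noncomputable def VSet {d T : ℕ} (L : Mat d T) : Set (Mat d T) :=
  {V | ∃ M P : Mat d T, memL M ∧ P ∈ OStar L M ∧ V = M * P - L}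

/-- The set `𝒱(L) = {V ∈ 𝐋 : (Vᵀ L)_{t,t} is symmetric for all t}`. -/
def calV {d T : ℕ} (L : Mat d T) : Set (Mat d T) :=
  {V | memL V ∧ ∀ t : Fin T, (blk (Vᵀ * L) t).IsSymm}

/-- The set `𝐋^reg = {L ∈ 𝐋 : (Lᵀ L)_{t,t} is positive definite for all t}`. -/
def LReg {d T : ℕ} : Set (Mat d T) :=
  {L | memL L ∧ ∀ t : Fin T, (blk (Lᵀ * L) t).PosDef}

/-- The sum of the singular values of a real square matrix `A`,
i.e. the trace of the positive semidefinite square root of `Aᵀ A`. -/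
noncomputable def svSum {n : ℕ} (A : Matrix (Fin n) (Fin n) ℝ) : ℝ :=
  ((Matrix.posSemidef_conjTranspose_mul_self A).isHermitian.eigenvectorUnitary.1 *
    diagonal ((RCLike.ofReal (K := ℝ)) ∘ Real.sqrt ∘
      (Matrix.posSemidef_conjTranspose_mul_self A).isHermitian.eigenvalues) *
    (star (Matrix.posSemidef_conjTranspose_mul_self A).isHermitian.eigenvectorUnitary :
      Matrix (Fin n) (Fin n) ℝ)).trace

/-- The operator norm of a real matrix: the supremum of the euclidean norm `‖A x‖₂`
over the euclidean unit ball. -/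
noncomputable def opNorm {m n : Type*} [Fintype m] [Fintype n] (A : Matrix m n ℝ) : ℝ :=
  sSup {r : ℝ | ∃ x : n → ℝ, (∑ j, (x j) ^ 2) ≤ 1 ∧ r = Real.sqrt (∑ i, (A.mulVec x i) ^ 2)}

set_option linter.unusedSectionVars false
set_option maxHeartbeats 1000000

section AuxGeneral

open Matrix Finset in
lemma conjT_eq_transpose' {m n : Type*} (A : Matrix m n ℝ) : Aᴴ = Aᵀ := by
  ext i j; simp [Matrix.conjTranspose_apply]

open Matrix Finset in
lemma sum_mul_eq_trace' {m n : Type*} [Fintype m] [Fintype n] (A B : Matrix m n ℝ) :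
    ∑ p, ∑ q, A p q * B p q = (Aᵀ * B).trace := by
  rw [Matrix.trace]
  simp only [Matrix.diag, Matrix.mul_apply, Matrix.transpose_apply]
  rw [Finset.sum_comm]

open Matrix Finset in
lemma sum_sq_eq_trace' {m n : Type*} [Fintype m] [Fintype n] (A : Matrix m n ℝ) :
    ∑ p, ∑ q, (A p q) ^ 2 = (Aᵀ * A).trace := by
  rw [← sum_mul_eq_trace']
  simp [sq]

open Matrix Finset in
lemma sum_sq_sub' {m n : Type*} [Fintype m] [Fintype n] (A B : Matrix m n ℝ) :
    ∑ p, ∑ q, ((A - B) p q) ^ 2 =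
      (∑ p, ∑ q, (A p q) ^ 2) - 2 * (Aᵀ * B).trace + ∑ p, ∑ q, (B p q) ^ 2 := by
  have h : ∀ p q, ((A - B) p q) ^ 2
      = ((A p q) ^ 2 - 2 * (A p q * B p q)) + (B p q) ^ 2 := fun p q => by
    simp [Matrix.sub_apply]; ring
  rw [← sum_mul_eq_trace' A B]
  simp_rw [h, Finset.sum_add_distrib, Finset.sum_sub_distrib, ← Finset.mul_sum]

open Matrix Finset in
/-- Cauchy–Schwarz workhorse: `tr(B Q) ≤ tr B` for `B` PSD and `Q` orthogonal. -/
lemma trace_mul_orth_le' {n : Type*} [Fintype n] [DecidableEq n] {B Q : Matrix n n ℝ}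
    (hB : B.PosSemidef) (hQ : Qᵀ * Q = 1) :
    (B * Q).trace ≤ B.trace := by
  obtain ⟨C, rfl⟩ : ∃ C : Matrix n n ℝ, B = Cᴴ * C := by
    open scoped MatrixOrder in exact CStarAlgebra.nonneg_iff_eq_star_mul_self.mp hB.nonneg
  rw [conjT_eq_transpose'] at *
  have hQQ : Q * Qᵀ = 1 := mul_eq_one_comm.mp hQ
  have hN : ((Cᵀ * C).trace : ℝ) = ∑ p, ∑ q, (C p q) ^ 2 := (sum_sq_eq_trace' C).symm
  have hN0 : (0:ℝ) ≤ (Cᵀ * C).trace := by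
    rw [hN]; positivity
  have htr : (Cᵀ * C * Q).trace = ∑ p, ∑ q, C p q * (C * Q) p q := by
    rw [sum_mul_eq_trace', Matrix.mul_assoc]
  have hCQ : ((C * Q)ᵀ * (C * Q)).trace = (Cᵀ * C).trace := by
    rw [Matrix.transpose_mul]
    calc (Qᵀ * Cᵀ * (C * Q)).trace = (Qᵀ * (Cᵀ * (C * Q))).trace := by rw [Matrix.mul_assoc]
    _ = ((Cᵀ * (C * Q)) * Qᵀ).trace := Matrix.trace_mul_comm _ _
    _ = (Cᵀ * C * (Q * Qᵀ)).trace := by rw [Matrix.mul_assoc, Matrix.mul_assoc, Matrix.mul_assoc]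
    _ = (Cᵀ * C).trace := by rw [hQQ, Matrix.mul_one]
  have hCS : ((Cᵀ * C * Q).trace) ^ 2 ≤ (Cᵀ * C).trace * (Cᵀ * C).trace := by
    rw [htr]
    calc (∑ p, ∑ q, C p q * (C * Q) p q) ^ 2
        = (∑ pq : n × n, C pq.1 pq.2 * (C * Q) pq.1 pq.2) ^ 2 := by
          rw [Fintype.sum_prod_type]
      _ ≤ (∑ pq : n × n, (C pq.1 pq.2) ^ 2) * ∑ pq : n × n, ((C * Q) pq.1 pq.2) ^ 2 :=
          Finset.sum_mul_sq_le_sq_mul_sq (Finset.univ : Finset (n × n))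
            (fun pq => C pq.1 pq.2) (fun pq => (C * Q) pq.1 pq.2)
      _ = (∑ p, ∑ q, (C p q) ^ 2) * ∑ p, ∑ q, ((C * Q) p q) ^ 2 := by
          rw [Fintype.sum_prod_type, Fintype.sum_prod_type]
      _ = (Cᵀ * C).trace * (Cᵀ * C).trace := by
          rw [sum_sq_eq_trace', sum_sq_eq_trace', hCQ]
  nlinarith [hCS, hN0]

end AuxGeneral

section BlockAux
open Matrix Finset

variable {d T : ℕ}

lemma memO_one : memO (1 : Mat d T) := by
  refine ⟨fun t s i j hts => Matrix.one_apply_ne (by simp [Prod.ext_iff, hts]), by simp⟩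

lemma memL_add {A B : Mat d T} (hA : memL A) (hB : memL B) : memL (A + B) := by
  intro t s i j h; simp [Matrix.add_apply, hA t s i j h, hB t s i j h]

lemma memL_smul {A : Mat d T} (c : ℝ) (hA : memL A) : memL (c • A) := by
  intro t s i j h; simp [Matrix.smul_apply, hA t s i j h]

lemma memL_sub {A B : Mat d T} (hA : memL A) (hB : memL B) : memL (A - B) := by
  intro t s i j h; simp [Matrix.sub_apply, hA t s i j h, hB t s i j h]

lemma memL_mul_blockdiag {A B : Mat d T} (hA : memL A)
    (hB : ∀ (t s : Fin T) (i j : Fin d), t ≠ s → B (t, i) (s, j) = 0) : memL (A * B) := by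
  intro t s i j h
  rw [Matrix.mul_apply]
  apply Finset.sum_eq_zero
  rintro ⟨u, k⟩ -
  by_cases hu : u = s
  · subst hu; rw [hA t u i k h, zero_mul]
  · rw [hB u s k j hu, mul_zero]

lemma mul_blockdiag {A B : Mat d T}
    (hA : ∀ (t s : Fin T) (i j : Fin d), t ≠ s → A (t, i) (s, j) = 0)
    (hB : ∀ (t s : Fin T) (i j : Fin d), t ≠ s → B (t, i) (s, j) = 0) :
    ∀ (t s : Fin T) (i j : Fin d), t ≠ s → (A * B) (t, i) (s, j) = 0 := by
  intro t s i j h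
  rw [Matrix.mul_apply]
  apply Finset.sum_eq_zero
  rintro ⟨u, k⟩ -
  by_cases hu : u = s
  · subst hu; rw [hA t u i k h, zero_mul]
  · rw [hB u s k j hu, mul_zero]

lemma blk_orth {O : Mat d T} (hO : memO O) (t : Fin T) : (blk O t)ᵀ * blk O t = 1 := by
  ext i j
  have h1 := congrFun (congrFun hO.2 (t, i)) (t, j)
  rw [Matrix.mul_apply] at h1
  rw [Matrix.mul_apply]
  have h2 : ∑ q : Fin T × Fin d, Oᵀ (t, i) q * O q (t, j)
      = ∑ k : Fin d, O (t, k) (t, i) * O (t, k) (t, j) := by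
    rw [Fintype.sum_prod_type]
    rw [Finset.sum_eq_single t]
    · simp [Matrix.transpose_apply]
    · intro s _ hs
      apply Finset.sum_eq_zero
      intro k _
      rw [Matrix.transpose_apply, hO.1 s t k i hs, zero_mul]
    · simp
  rw [h2] at h1
  have h3 : ∑ k : Fin d, (blk O t)ᵀ i k * blk O t k j
      = ∑ k : Fin d, O (t, k) (t, i) * O (t, k) (t, j) := rfl
  rw [h3, h1]
  by_cases hij : i = j <;>
    simp [Matrix.one_apply, Prod.ext_iff, hij]

lemma trace_eq_sum_blk (S : Mat d T) : S.trace = ∑ t, (blk S t).trace := by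
  rw [Matrix.trace, Fintype.sum_prod_type]
  rfl

lemma trace_mul_blockdiag (S O : Mat d T)
    (hO : ∀ (t s : Fin T) (i j : Fin d), t ≠ s → O (t, i) (s, j) = 0) :
    (S * O).trace = ∑ t, ((blk S t) * (blk O t)).trace := by
  rw [Matrix.trace, Fintype.sum_prod_type]
  apply Finset.sum_congr rfl
  intro t _
  rw [Matrix.trace]
  apply Finset.sum_congr rfl
  intro i _
  simp only [Matrix.diag, Matrix.mul_apply]
  rw [Fintype.sum_prod_type, Finset.sum_eq_single t]
  · rfl
  · intro s _ hs
    apply Finset.sum_eq_zero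
    intro k _
    rw [hO s t k i hs, mul_zero]
  · simp

lemma blk_transpose (A : Mat d T) (t : Fin T) : blk Aᵀ t = (blk A t)ᵀ := rfl

lemma blk_transpose_mul (A B : Mat d T) (t : Fin T) :
    blk (Aᵀ * B) t = (colBlk A t)ᵀ * colBlk B t := by
  ext i j
  simp [blk, colBlk, Matrix.mul_apply]

lemma blk_sub (A B : Mat d T) (t : Fin T) : blk (A - B) t = blk A t - blk B t := rfl

lemma blk_smul (c : ℝ) (A : Mat d T) (t : Fin T) : blk (c • A) t = c • blk A t := rfl

lemma blk_tt_symm (A B : Mat d T) (t : Fin T) : blk (Aᵀ * B) t = (blk (Bᵀ * A) t)ᵀ := by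
  ext i j
  simp only [blk, Matrix.mul_apply, Matrix.transpose_apply]
  exact Finset.sum_congr rfl fun q _ => mul_comm _ _

lemma blk_add (A B : Mat d T) (t : Fin T) : blk (A + B) t = blk A t + blk B t := rfl

end BlockAux


def giv {d : ℕ} (i j : Fin d) (c s : ℝ) : Matrix (Fin d) (Fin d) ℝ :=
  Matrix.of fun k l =>
    if k = i then (if l = i then c else if l = j then -s else 0)
    else if k = j then (if l = i then s else if l = j then c else 0)
    else if k = l then 1 else 0

section Giv
open Matrix Finset
variable {d : ℕ} {i j : Fin d}

lemma sum_split (hij : i ≠ j) (F : Fin d → ℝ) :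
    ∑ m, F m = F i + F j + ∑ m ∈ (univ \ {i, j}), F m := by
  have huniv : (univ : Finset (Fin d)) = insert i (insert j (univ \ {i, j})) := by
    ext m
    simp only [Finset.mem_univ, Finset.mem_insert, Finset.mem_sdiff, Finset.mem_singleton,
      true_iff, true_and]
    tauto
  nth_rewrite 1 [huniv]
  rw [Finset.sum_insert, Finset.sum_insert]
  · ring
  · simp
  · simp [hij]

lemma sum_delta_mem (s : Finset (Fin d)) (F : Fin d → ℝ) (k : Fin d) :
    ∑ m ∈ s, F m * (if m = k then 1 else 0) = if k ∈ s then F k else 0 := by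
  rw [← Finset.sum_ite_eq' s k F]
  apply Finset.sum_congr rfl
  intro m _
  by_cases hm : m = k <;> simp [hm]

lemma giv_orth (hij : i ≠ j) {c s : ℝ} (h : c ^ 2 + s ^ 2 = 1) :
    (giv i j c s)ᵀ * giv i j c s = 1 := by
  ext a b
  rw [Matrix.mul_apply]
  have heq : ∀ m, (giv i j c s)ᵀ a m * giv i j c s m b
      = giv i j c s m a * giv i j c s m b := fun m => rfl
  simp only [heq]
  rw [sum_split hij]
  have hrest : ∑ m ∈ univ \ {i, j}, giv i j c s m a * giv i j c s m b
      = ∑ m ∈ univ \ {i, j}, (if m = a then 1 else 0) * (if m = b then 1 else 0) := by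
    apply Finset.sum_congr rfl
    intro m hm
    simp only [Finset.mem_sdiff, Finset.mem_univ, Finset.mem_insert,
      Finset.mem_singleton, true_and] at hm
    push_neg at hm
    simp [giv, hm.1, hm.2]
  rw [hrest]
  have hrest2 : ∑ m ∈ univ \ {i, j}, (if m = a then (1:ℝ) else 0) * (if m = b then 1 else 0)
      = if a = b ∧ a ≠ i ∧ a ≠ j then 1 else 0 := by
    by_cases hab : a = b
    · subst hab
      have : ∀ m, (if m = a then (1:ℝ) else 0) * (if m = a then 1 else 0)
          = 1 * (if m = a then 1 else 0) := by
        intro m; by_cases hm : m = a <;> simp [hm]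
      simp only [this]
      rw [sum_delta_mem]
      simp only [Finset.mem_sdiff, Finset.mem_univ, Finset.mem_insert,
        Finset.mem_singleton, true_and]
      by_cases h1 : a = i <;> by_cases h2 : a = j <;> simp [h1, h2]
    · rw [Finset.sum_eq_zero, if_neg (by tauto)]
      intro m _
      by_cases hm : m = a
      · subst hm; simp [hab]
      · simp [hm]
  rw [hrest2]
  simp only [giv, Matrix.of_apply, Matrix.one_apply]
  split_ifs <;> simp_all <;> nlinarith [h]

lemma trace_mul_giv (hij : i ≠ j) (c s : ℝ) (B : Matrix (Fin d) (Fin d) ℝ) :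
    (B * giv i j c s).trace
      = B.trace + (c - 1) * (B i i + B j j) + s * (B i j - B j i) := by
  have hdiag : ∀ k, (B * giv i j c s) k k
      = B k i * giv i j c s i k + B k j * giv i j c s j k
        + (if k ∈ univ \ ({i, j} : Finset (Fin d)) then B k k else 0) := by
    intro k
    rw [Matrix.mul_apply, sum_split hij]
    have hr : ∑ m ∈ univ \ {i, j}, B k m * giv i j c s m k
        = if k ∈ univ \ ({i, j} : Finset (Fin d)) then B k k else 0 := by
      rw [← sum_delta_mem (univ \ {i, j}) (fun l => B k l) k]
      apply Finset.sum_congr rfl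
      intro m hm
      simp only [Finset.mem_sdiff, Finset.mem_univ, Finset.mem_insert,
        Finset.mem_singleton, true_and] at hm
      push_neg at hm
      have hg : giv i j c s m k = if m = k then 1 else 0 := by simp [giv, hm.1, hm.2]
      rw [hg]
    rw [hr]
  rw [Matrix.trace]
  simp only [Matrix.diag]
  simp only [hdiag]
  rw [Finset.sum_add_distrib, Finset.sum_add_distrib]
  have h1 : ∑ k, B k i * giv i j c s i k = c * B i i + (-s) * B j i := by
    rw [sum_split hij (fun k => B k i * giv i j c s i k)]
    rw [Finset.sum_eq_zero]
    · simp [giv, hij, hij.symm]; ring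
    · intro m hm
      simp only [Finset.mem_sdiff, Finset.mem_univ, Finset.mem_insert,
        Finset.mem_singleton, true_and] at hm
      push_neg at hm
      simp [giv, hm.1, hm.2, Ne.symm hm.1, Ne.symm hm.2]
  have h2 : ∑ k, B k j * giv i j c s j k = s * B i j + c * B j j := by
    rw [sum_split hij (fun k => B k j * giv i j c s j k)]
    rw [Finset.sum_eq_zero]
    · simp [giv, hij, hij.symm]; ring
    · intro m hm
      simp only [Finset.mem_sdiff, Finset.mem_univ, Finset.mem_insert,
        Finset.mem_singleton, true_and] at hm
      push_neg at hm
      simp [giv, hm.1, hm.2, Ne.symm hm.1, Ne.symm hm.2]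
  have h3 : ∑ k, (if k ∈ univ \ ({i, j} : Finset (Fin d)) then B k k else 0)
      = B.trace - B i i - B j j := by
    rw [Finset.sum_ite_mem, Finset.univ_inter]
    rw [Matrix.trace]
    simp only [Matrix.diag]
    rw [sum_split hij (fun k => B k k)]
    ring
  rw [h1, h2, h3]
  ring

end Giv

open Matrix Finset in
def Dmat {d T : ℕ} (t : Fin T) (Q : Matrix (Fin d) (Fin d) ℝ) : Mat d T :=
  Matrix.of fun p q => if p.1 = t ∧ q.1 = t then Q p.2 q.2 else if p = q then 1 else 0

section DmatSec
open Matrix Finset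
variable {d T : ℕ}

lemma Dmat_row_t (t : Fin T) (Q : Matrix (Fin d) (Fin d) ℝ) (i k : Fin d) (u : Fin T) :
    Dmat t Q (t, i) (u, k) = if u = t then Q i k else 0 := by
  by_cases hu : u = t
  · simp [Dmat, hu]
  · simp only [Dmat, Matrix.of_apply, if_neg hu]
    rw [if_neg (by simp [hu]), if_neg (by simp [Prod.ext_iff]; intro h; exact absurd h.symm hu)]

lemma Dmat_col_t (t : Fin T) (Q : Matrix (Fin d) (Fin d) ℝ) (i k : Fin d) (u : Fin T) :
    Dmat t Q (u, k) (t, i) = if u = t then Q k i else 0 := by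
  by_cases hu : u = t
  · simp [Dmat, hu]
  · simp only [Dmat, Matrix.of_apply, if_neg hu]
    rw [if_neg (by simp [hu]), if_neg (by simp [Prod.ext_iff, hu])]

lemma Dmat_row_ne {t s : Fin T} (hs : s ≠ t) (Q : Matrix (Fin d) (Fin d) ℝ) (i : Fin d)
    (r : Fin T × Fin d) : Dmat t Q (s, i) r = if (s, i) = r then 1 else 0 := by
  simp only [Dmat, Matrix.of_apply]
  rw [if_neg (by simp [hs])]

lemma Dmat_col_ne {t s : Fin T} (hs : s ≠ t) (Q : Matrix (Fin d) (Fin d) ℝ) (i : Fin d)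
    (r : Fin T × Fin d) : Dmat t Q r (s, i) = if r = (s, i) then 1 else 0 := by
  simp only [Dmat, Matrix.of_apply]
  rw [if_neg (by simp [hs])]

lemma Dmat_blockdiag {t : Fin T} {Q : Matrix (Fin d) (Fin d) ℝ} :
    ∀ (s s' : Fin T) (i j : Fin d), s ≠ s' → Dmat t Q (s, i) (s', j) = 0 := by
  intro s s' i j h
  simp only [Dmat, Matrix.of_apply]
  rw [if_neg, if_neg]
  · simp [Prod.ext_iff, h]
  · rintro ⟨rfl, rfl⟩; exact h rfl

lemma Dmat_transpose {t : Fin T} {Q : Matrix (Fin d) (Fin d) ℝ} :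
    (Dmat t Q)ᵀ = Dmat t Qᵀ := by
  ext ⟨s, i⟩ ⟨s', j⟩
  simp only [Matrix.transpose_apply, Dmat, Matrix.of_apply]
  by_cases h1 : s = t <;> by_cases h2 : s' = t
  · simp [h1, h2]
  · simp only [h1, h2, and_true, and_false, if_false, true_and, false_and]
    simp [Prod.ext_iff, eq_comm, and_comm]
  · simp only [h1, h2, and_true, and_false, if_false, true_and, false_and]
    simp [Prod.ext_iff, eq_comm, and_comm]
  · simp only [h1, h2, and_true, and_false, if_false, true_and, false_and]
    simp [Prod.ext_iff, eq_comm, and_comm]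

lemma Dmat_mul {t : Fin T} {Q₁ Q₂ : Matrix (Fin d) (Fin d) ℝ} :
    Dmat t Q₁ * Dmat t Q₂ = Dmat t (Q₁ * Q₂) := by
  ext ⟨s, i⟩ ⟨s', j⟩
  by_cases hs : s = t
  · rw [hs, Matrix.mul_apply, Fintype.sum_prod_type]
    have h2 : ∀ u : Fin T, ∑ k, Dmat t Q₁ (t, i) (u, k) * Dmat t Q₂ (u, k) (s', j)
        = if u = t then ∑ k, Q₁ i k * Dmat t Q₂ (t, k) (s', j) else 0 := by
      intro u
      by_cases hu : u = t
      · rw [hu, if_pos rfl]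
        apply Finset.sum_congr rfl
        intro k _
        rw [Dmat_row_t, if_pos rfl]
      · rw [if_neg hu]
        apply Finset.sum_eq_zero
        intro k _
        rw [Dmat_row_t, if_neg hu, zero_mul]
    simp only [h2]
    rw [Finset.sum_ite_eq' Finset.univ t _, if_pos (Finset.mem_univ t)]
    by_cases hs' : s' = t
    · rw [hs']
      have h3 : ∀ k, Dmat t Q₂ (t, k) (t, j) = Q₂ k j := by
        intro k; rw [Dmat_row_t, if_pos rfl]
      simp only [h3]
      have h4 : Dmat t (Q₁ * Q₂) (t, i) (t, j) = (Q₁ * Q₂) i j := by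
        rw [Dmat_row_t, if_pos rfl]
      rw [h4, Matrix.mul_apply]
    · have h3 : ∀ k, Dmat t Q₂ (t, k) (s', j) = 0 := by
        intro k; rw [Dmat_row_t, if_neg hs']
      simp only [h3, mul_zero, Finset.sum_const_zero]
      rw [Dmat_row_t, if_neg hs']
  · rw [Matrix.mul_apply]
    simp only [Dmat_row_ne hs, ite_mul, one_mul, zero_mul]
    rw [Finset.sum_ite_eq Finset.univ ((s, i) : Fin T × Fin d)
      (fun r => Dmat t Q₂ r (s', j)), if_pos (Finset.mem_univ _)]
    simp only [Dmat_row_ne hs]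

lemma Dmat_one {t : Fin T} : Dmat t (1 : Matrix (Fin d) (Fin d) ℝ) = 1 := by
  ext ⟨s, i⟩ ⟨s', j⟩
  simp only [Dmat, Matrix.of_apply, Matrix.one_apply, Prod.ext_iff]
  by_cases h1 : s = t <;> by_cases h2 : s' = t
  · simp [h1, h2]
  · simp [h1, h2]
  · simp [h1, h2]
  · simp [h1, h2]

lemma memO_mul_Dmat {t : Fin T} {Q : Matrix (Fin d) (Fin d) ℝ} {P : Mat d T}
    (hP : memO P) (hQ : Qᵀ * Q = 1) : memO (P * Dmat t Q) := by
  constructor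
  · exact mul_blockdiag hP.1 Dmat_blockdiag
  · rw [Matrix.transpose_mul, Dmat_transpose]
    calc Dmat t Qᵀ * Pᵀ * (P * Dmat t Q)
        = Dmat t Qᵀ * (Pᵀ * P * Dmat t Q) := by
          rw [Matrix.mul_assoc, Matrix.mul_assoc]
      _ = Dmat t Qᵀ * Dmat t Q := by rw [hP.2, Matrix.one_mul]
      _ = 1 := by rw [Dmat_mul, hQ, Dmat_one]

lemma trace_mul_Dmat {t : Fin T} {Q : Matrix (Fin d) (Fin d) ℝ} (S : Mat d T) :
    (S * Dmat t Q).trace = S.trace - (blk S t).trace + (blk S t * Q).trace := by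
  have hterm : ∀ s : Fin T, (∑ i, (S * Dmat t Q) (s, i) (s, i))
      = if s = t then (blk S t * Q).trace else ∑ i, S (s, i) (s, i) := by
    intro s
    by_cases hs : s = t
    · rw [if_pos hs, hs, Matrix.trace]
      apply Finset.sum_congr rfl
      intro i _
      rw [Matrix.mul_apply, Fintype.sum_prod_type, Finset.sum_eq_single t]
      · simp only [Matrix.diag, Matrix.mul_apply]
        apply Finset.sum_congr rfl
        intro k _
        rw [Dmat_col_t, if_pos rfl]
        rfl
      · intro u _ hu
        apply Finset.sum_eq_zero
        intro k _
        rw [Dmat_col_t, if_neg hu, mul_zero]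
      · simp
    · rw [if_neg hs]
      apply Finset.sum_congr rfl
      intro i _
      rw [Matrix.mul_apply]
      simp only [Dmat_col_ne hs, mul_ite, mul_one, mul_zero]
      rw [Finset.sum_ite_eq' Finset.univ ((s, i) : Fin T × Fin d) (fun r => S (s, i) r),
        if_pos (Finset.mem_univ _)]
  have htr : (S * Dmat t Q).trace = ∑ s, ∑ i, (S * Dmat t Q) (s, i) (s, i) := by
    rw [Matrix.trace, Fintype.sum_prod_type]; rfl
  have hStr : S.trace = ∑ s, ∑ i, S (s, i) (s, i) := by
    rw [Matrix.trace, Fintype.sum_prod_type]; rfl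
  have hblk : (blk S t).trace = ∑ i, S (t, i) (t, i) := rfl
  rw [htr, hStr, hblk]
  simp only [hterm]
  have hsplit : ∀ s : Fin T,
      (if s = t then (blk S t * Q).trace else ∑ i, S (s, i) (s, i))
      = (∑ i, S (s, i) (s, i))
        + (if s = t then (blk S t * Q).trace - ∑ i, S (t, i) (t, i) else 0) := by
    intro s
    by_cases hs : s = t
    · rw [if_pos hs, if_pos hs, hs]; ring
    · rw [if_neg hs, if_neg hs]; ring
  simp only [hsplit]
  rw [Finset.sum_add_distrib, Finset.sum_ite_eq' Finset.univ t, if_pos (Finset.mem_univ t)]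
  ring

end DmatSec


open Finset in
lemma dot_self_nonneg {n : Type*} [Fintype n] (v : n → ℝ) : 0 ≤ v ⬝ᵥ v :=
  Finset.sum_nonneg fun i _ => mul_self_nonneg _

lemma euc_norm_sq {ι : Type*} [Fintype ι] (z : EuclideanSpace ℝ ι) :
    ‖z‖ ^ 2 = (z : ι → ℝ) ⬝ᵥ (z : ι → ℝ) := by
  rw [EuclideanSpace.norm_eq, Real.sq_sqrt (by positivity)]
  simp [dotProduct, sq]

lemma quad_bound {n : Type*} [Fintype n] (S : Matrix n n ℝ) (x : n → ℝ) :
    |x ⬝ᵥ (S *ᵥ x)| ≤ (∑ i, ∑ j, |S i j|) * (x ⬝ᵥ x) := by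
  have habs : ∀ i j : n, |x i * x j| ≤ x ⬝ᵥ x := by
    intro i j
    have h1 : x i * x i ≤ x ⬝ᵥ x :=
      Finset.single_le_sum (f := fun k => x k * x k) (fun k _ => mul_self_nonneg _)
        (Finset.mem_univ i)
    have h2 : x j * x j ≤ x ⬝ᵥ x :=
      Finset.single_le_sum (f := fun k => x k * x k) (fun k _ => mul_self_nonneg _)
        (Finset.mem_univ j)
    rw [abs_mul]
    nlinarith [sq_nonneg (|x i| - |x j|), sq_abs (x i), sq_abs (x j), abs_nonneg (x i),
      abs_nonneg (x j)]
  have hexp : x ⬝ᵥ (S *ᵥ x) = ∑ i, ∑ j, x i * (S i j * x j) := by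
    simp [dotProduct, Matrix.mulVec, Finset.mul_sum]
  rw [hexp]
  calc |∑ i, ∑ j, x i * (S i j * x j)|
      ≤ ∑ i, |∑ j, x i * (S i j * x j)| := Finset.abs_sum_le_sum_abs _ _
    _ ≤ ∑ i, ∑ j, |x i * (S i j * x j)| :=
        Finset.sum_le_sum fun i _ => Finset.abs_sum_le_sum_abs _ _
    _ = ∑ i, ∑ j, |S i j| * |x i * x j| := by
        apply Finset.sum_congr rfl; intro i _
        apply Finset.sum_congr rfl; intro j _
        rw [show x i * (S i j * x j) = S i j * (x i * x j) by ring, abs_mul]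
    _ ≤ ∑ i, ∑ j, |S i j| * (x ⬝ᵥ x) := by
        apply Finset.sum_le_sum; intro i _
        apply Finset.sum_le_sum; intro j _
        exact mul_le_mul_of_nonneg_left (habs i j) (abs_nonneg _)
    _ = (∑ i, ∑ j, |S i j|) * (x ⬝ᵥ x) := by
        rw [Finset.sum_mul]
        apply Finset.sum_congr rfl; intro i _
        rw [Finset.sum_mul]

/-- Key perturbation lemma: if `S = Amᵀ Bm` is symmetric, then `Bmᵀ Bm + ε S` is PSD
for all small enough positive `ε`. -/
lemma psd_perturb {n m : Type*} [Fintype n] [Fintype m] [DecidableEq n]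
    (Bm Am : Matrix m n ℝ) (hS : (Amᵀ * Bm).IsSymm) :
    ∃ e : ℝ, 0 < e ∧ ∀ ε : ℝ, 0 < ε → ε ≤ e →
      (Bmᵀ * Bm + ε • (Amᵀ * Bm)).PosSemidef := by
  classical
  set S : Matrix n n ℝ := Amᵀ * Bm with hSdef
  set C : ℝ := ∑ i, ∑ j, |S i j| with hCdef
  have hC0 : 0 ≤ C := Finset.sum_nonneg fun i _ => Finset.sum_nonneg fun j _ => abs_nonneg _
  -- the euclidean-space linear map induced by Bm
  let f : EuclideanSpace ℝ n →ₗ[ℝ] EuclideanSpace ℝ m :=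
    (WithLp.linearEquiv 2 ℝ (m → ℝ)).symm.toLinearMap ∘ₗ Bm.mulVecLin ∘ₗ
      (WithLp.linearEquiv 2 ℝ (n → ℝ)).toLinearMap
  have hf : ∀ z : EuclideanSpace ℝ n, (f z : m → ℝ) = Bm *ᵥ (z : n → ℝ) := fun z => rfl
  set K : Submodule ℝ (EuclideanSpace ℝ n) := LinearMap.ker f with hKdef
  let g : Kᗮ →ₗ[ℝ] EuclideanSpace ℝ m := f.domRestrict Kᗮ
  have hkerg : LinearMap.ker g = ⊥ := by
    rw [eq_bot_iff]
    rintro ⟨v, hv⟩ hgv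
    have hvK : v ∈ K := by
      rw [hKdef, LinearMap.mem_ker]
      exact hgv
    have : v ∈ K ⊓ Kᗮ := ⟨hvK, hv⟩
    rw [Submodule.inf_orthogonal_eq_bot] at this
    simpa using this
  obtain ⟨Kc, hKc0, hanti⟩ := g.exists_antilipschitzWith hkerg
  set c1 : ℝ := (Kc : ℝ) with hc1
  have hc10 : 0 ≤ c1 := Kc.coe_nonneg
  set μ : ℝ := ((c1 + 1) ^ 2)⁻¹ with hμdef
  have hμ0 : 0 < μ := by positivity
  have hmu : ∀ v : EuclideanSpace ℝ n, v ∈ Kᗮ →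
      μ * ((v : n → ℝ) ⬝ᵥ (v : n → ℝ)) ≤ (Bm *ᵥ (v : n → ℝ)) ⬝ᵥ (Bm *ᵥ (v : n → ℝ)) := by
    intro v hv
    have h1 : ‖v‖ ≤ c1 * ‖g ⟨v, hv⟩‖ := by
      have := hanti.le_mul_dist ⟨v, hv⟩ 0
      simpa [dist_eq_norm] using this
    have hgv : (g ⟨v, hv⟩ : m → ℝ) = Bm *ᵥ (v : n → ℝ) := rfl
    have h2 : ‖v‖ ^ 2 ≤ (c1 + 1) ^ 2 * ‖g ⟨v, hv⟩‖ ^ 2 := by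
      nlinarith [norm_nonneg v, norm_nonneg (g ⟨v, hv⟩), h1]
    have h3 := euc_norm_sq v
    have h4 := euc_norm_sq (g ⟨v, hv⟩)
    rw [h3] at h2
    rw [h4, hgv] at h2
    rw [hμdef]
    rw [inv_mul_le_iff₀ (by positivity)]
    linarith [h2]
  refine ⟨μ / (C + 1), by positivity, ?_⟩
  intro ε hε0 hεe
  have hεC : ε * (C + 1) ≤ μ := by
    rw [← le_div_iff₀ (by positivity)]
    exact hεe
  refine Matrix.PosSemidef.of_dotProduct_mulVec_nonneg ?_ ?_
  · -- Hermitian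
    have : (Bmᵀ * Bm + ε • S).IsSymm := by
      rw [Matrix.IsSymm, Matrix.transpose_add, Matrix.transpose_smul, hS,
        Matrix.transpose_mul, Matrix.transpose_transpose]
    rw [Matrix.IsHermitian]
    rw [show (Bmᵀ * Bm + ε • S)ᴴ = (Bmᵀ * Bm + ε • S)ᵀ from by
      ext a b; simp [Matrix.conjTranspose_apply]]
    exact this
  · intro x
    have hstar : star x = x := by ext i; simp
    rw [hstar]
    -- decomposition
    set xE : EuclideanSpace ℝ n := (WithLp.equiv 2 (n → ℝ)).symm x with hxE
    have hxx : (xE : n → ℝ) = x := rfl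
    set y : EuclideanSpace ℝ n := (K.orthogonalProjectionOnto xE : EuclideanSpace ℝ n) with hy
    set u : EuclideanSpace ℝ n := xE - y with hu
    have hyK : y ∈ K := SetLike.coe_mem _
    have huU : u ∈ Kᗮ := Submodule.sub_starProjection_mem_orthogonal (K := K) xE
    have hBy : Bm *ᵥ (y : n → ℝ) = 0 := by
      have h0 := LinearMap.mem_ker.mp hyK
      rw [← hf y]
      exact congrArg WithLp.ofLp h0
    have hSy : S *ᵥ (y : n → ℝ) = 0 := by
      rw [hSdef, ← Matrix.mulVec_mulVec, hBy, Matrix.mulVec_zero]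
    have hxyu : x = (y : n → ℝ) + (u : n → ℝ) := by
      rw [← hxx, hu]
      ext i
      simp
    have huu : 0 ≤ (u : n → ℝ) ⬝ᵥ (u : n → ℝ) := dot_self_nonneg _
    -- quadratic form of G
    have hG : x ⬝ᵥ ((Bmᵀ * Bm) *ᵥ x) = (Bm *ᵥ x) ⬝ᵥ (Bm *ᵥ x) := by
      rw [← Matrix.mulVec_mulVec, Matrix.dotProduct_mulVec, Matrix.vecMul_transpose]
    have hBx : Bm *ᵥ x = Bm *ᵥ (u : n → ℝ) := by
      rw [hxyu, Matrix.mulVec_add, hBy, zero_add]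
    have hGlb : μ * ((u : n → ℝ) ⬝ᵥ (u : n → ℝ)) ≤ x ⬝ᵥ ((Bmᵀ * Bm) *ᵥ x) := by
      rw [hG, hBx]
      exact hmu u huU
    -- quadratic form of S
    have hSx : x ⬝ᵥ (S *ᵥ x) = (u : n → ℝ) ⬝ᵥ (S *ᵥ (u : n → ℝ)) := by
      rw [hxyu, Matrix.mulVec_add, hSy, zero_add]
      rw [add_dotProduct]
      have hyu : (y : n → ℝ) ⬝ᵥ (S *ᵥ (u : n → ℝ)) = 0 := by
        rw [Matrix.dotProduct_mulVec, ← Matrix.mulVec_transpose, hS.eq, hSy,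
          zero_dotProduct]
      rw [hyu, zero_add]
    have hSbound := quad_bound S (u : n → ℝ)
    -- put it together
    have hexpand : x ⬝ᵥ ((Bmᵀ * Bm + ε • S) *ᵥ x)
        = x ⬝ᵥ ((Bmᵀ * Bm) *ᵥ x) + ε * (x ⬝ᵥ (S *ᵥ x)) := by
      rw [Matrix.add_mulVec, dotProduct_add, Matrix.smul_mulVec,
        dotProduct_smul]
      rfl
    rw [hexpand, hSx]
    have h5 : ε * C ≤ μ := by nlinarith
    have h6 : -(C * ((u : n → ℝ) ⬝ᵥ (u : n → ℝ))) ≤ (u : n → ℝ) ⬝ᵥ (S *ᵥ (u : n → ℝ)) :=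
      neg_le_of_abs_le hSbound |>.trans_eq' (by ring) |>.trans_eq (by rfl)
    nlinarith [mul_le_mul_of_nonneg_right h5 huu, mul_le_mul_of_nonneg_left h6 hε0.le]

section MainAux
open Matrix Finset

variable {d T : ℕ}

lemma sumSq_mul_memO {M O : Mat d T} (hO : memO O) :
    ∑ p, ∑ q, ((M * O) p q) ^ 2 = (Mᵀ * M).trace := by
  rw [sum_sq_eq_trace', Matrix.transpose_mul]
  calc (Oᵀ * Mᵀ * (M * O)).trace
      = (Oᵀ * (Mᵀ * M * O)).trace := by
        rw [Matrix.mul_assoc Oᵀ Mᵀ (M * O), ← Matrix.mul_assoc Mᵀ M O]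
    _ = ((Mᵀ * M * O) * Oᵀ).trace := Matrix.trace_mul_comm _ _
    _ = (Mᵀ * M * (O * Oᵀ)).trace := by rw [Matrix.mul_assoc]
    _ = (Mᵀ * M).trace := by rw [mul_eq_one_comm.mp hO.2, Matrix.mul_one]

lemma frob_le_iff_trace {L M O₁ O₂ : Mat d T} (hO₁ : memO O₁) (hO₂ : memO O₂) :
    frobNorm (L - M * O₁) ≤ frobNorm (L - M * O₂) ↔
      (Lᵀ * (M * O₂)).trace ≤ (Lᵀ * (M * O₁)).trace := by
  rw [frobNorm, frobNorm, Real.sqrt_le_sqrt_iff (by positivity)]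
  rw [sum_sq_sub', sum_sq_sub', sumSq_mul_memO hO₁, sumSq_mul_memO hO₂]
  constructor <;> intro h <;> linarith

lemma dABW_le {L M O : Mat d T} (hO : memO O) : dABW L M ≤ frobNorm (L - M * O) := by
  apply csInf_le
  · refine ⟨0, ?_⟩
    rintro r ⟨O', _, rfl⟩
    exact Real.sqrt_nonneg _
  · exact ⟨O, hO, rfl⟩

/-- Sufficiency: if every diagonal block of `Lᵀ M` is PSD, then the identity is optimal. -/
lemma one_mem_OStar (L M : Mat d T) (h : ∀ t, (blk (Lᵀ * M) t).PosSemidef) :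
    (1 : Mat d T) ∈ OStar L M := by
  have key : ∀ O : Mat d T, memO O → frobNorm (L - M * 1) ≤ frobNorm (L - M * O) := by
    intro O hO
    rw [frob_le_iff_trace memO_one hO]
    rw [Matrix.mul_one, ← Matrix.mul_assoc]
    rw [trace_mul_blockdiag (Lᵀ * M) O hO.1, trace_eq_sum_blk (Lᵀ * M)]
    apply Finset.sum_le_sum
    intro t _
    exact trace_mul_orth_le' (h t) (blk_orth hO t)
  refine ⟨memO_one, ?_⟩
  refine le_antisymm (le_csInf ⟨frobNorm (L - M * 1), 1, memO_one, rfl⟩ ?_)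
    (dABW_le memO_one)
  rintro r ⟨O, hO, rfl⟩
  exact key O hO

/-- Necessity: first-order optimality yields symmetry of the diagonal blocks. -/
lemma OStar_symm {L M P : Mat d T} (hP : P ∈ OStar L M) (t : Fin T) :
    (blk (Lᵀ * (M * P)) t).IsSymm := by
  set B := blk (Lᵀ * (M * P)) t with hB
  rw [Matrix.IsSymm]
  ext i j
  rw [Matrix.transpose_apply]
  rcases eq_or_ne i j with rfl | hij
  · rfl
  set a : ℝ := B i i + B j j with ha
  set b : ℝ := B i j - B j i with hbdef
  suffices hb : b = 0 by
    have : B i j - B j i = 0 := hb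
    linarith
  by_contra hb
  set r : ℝ := Real.sqrt (a ^ 2 + b ^ 2) with hrdef
  have hb2 : 0 < b ^ 2 := by positivity
  have hr2 : r ^ 2 = a ^ 2 + b ^ 2 := Real.sq_sqrt (by positivity)
  have hr0 : 0 < r := Real.sqrt_pos.mpr (by positivity)
  set c : ℝ := a / r with hc
  set s : ℝ := b / r with hs
  have hcs : c ^ 2 + s ^ 2 = 1 := by
    rw [hc, hs, div_pow, div_pow, ← add_div, hr2, div_self (by positivity)]
  have hO' : memO (P * Dmat t (giv i j c s)) := memO_mul_Dmat hP.1 (giv_orth hij hcs)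
  have hfr : frobNorm (L - M * P) ≤ frobNorm (L - M * (P * Dmat t (giv i j c s))) := by
    rw [hP.2]
    exact dABW_le hO'
  have htr := (frob_le_iff_trace hP.1 hO').mp hfr
  have hassoc : Lᵀ * (M * (P * Dmat t (giv i j c s)))
      = (Lᵀ * (M * P)) * Dmat t (giv i j c s) := by
    rw [← Matrix.mul_assoc M P, ← Matrix.mul_assoc Lᵀ (M * P)]
  rw [hassoc, trace_mul_Dmat (Lᵀ * (M * P)), trace_mul_giv hij] at htr
  have hineq : (c - 1) * a + s * b ≤ 0 := by
    rw [← hB] at htr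
    rw [← ha, ← hbdef] at htr
    linarith
  have hmul : ((a / r - 1) * a + (b / r) * b) * r ≤ 0 := by
    have := mul_le_mul_of_nonneg_right hineq hr0.le
    rw [zero_mul] at this
    exact this
  have hexp : ((a / r - 1) * a + (b / r) * b) * r = a ^ 2 + b ^ 2 - a * r := by
    field_simp
    ring
  rw [hexp] at hmul
  nlinarith [hr2, hr0, hb2]

lemma VSet_subset_calV {L : Mat d T} (hL : memL L) : VSet L ⊆ calV L := by
  rintro V ⟨M, P, hM, hP, rfl⟩
  constructor
  · exact memL_sub (memL_mul_blockdiag hM hP.1.1) hL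
  · intro t
    have hs := OStar_symm hP t
    have h1 : ((M * P - L)ᵀ * L) = (M * P)ᵀ * L - Lᵀ * L := by
      rw [Matrix.transpose_sub, Matrix.sub_mul]
    rw [h1, blk_sub]
    apply Matrix.IsSymm.sub
    · rw [blk_tt_symm]
      exact hs.transpose
    · have := blk_tt_symm L L t
      rw [Matrix.IsSymm]
      exact this.symm

end MainAux

/-- the linear space `𝒱(L)` is the cone generated by `𝐕(L)`. -/
theorem stmt15 (d T : ℕ) (hd : 0 < d) (hT : 0 < T) (L : Mat d T) (hL : memL L) :
    calV L = {W : Mat d T | ∃ lam : ℝ, 0 ≤ lam ∧ ∃ V ∈ VSet L, W = lam • V} := by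
  ext W
  simp only [Set.mem_setOf_eq]
  constructor
  · rintro ⟨hWL, hWsym⟩
    have hblocks : ∀ t : Fin T, ∃ e : ℝ, 0 < e ∧ ∀ ε : ℝ, 0 < ε → ε ≤ e →
        (blk (Lᵀ * (L + ε • W)) t).PosSemidef := by
      intro t
      have hSsym : ((colBlk W t)ᵀ * colBlk L t).IsSymm := by
        rw [← blk_transpose_mul]
        exact hWsym t
      obtain ⟨e, he, hPSD⟩ := psd_perturb (colBlk L t) (colBlk W t) hSsym
      refine ⟨e, he, fun ε hε hεe => ?_⟩
      have h2 : blk (Lᵀ * W) t = (colBlk W t)ᵀ * colBlk L t := by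
        rw [blk_tt_symm L W t, (hWsym t).eq, blk_transpose_mul]
      have h3 : blk (Lᵀ * (L + ε • W)) t
          = (colBlk L t)ᵀ * colBlk L t + ε • ((colBlk W t)ᵀ * colBlk L t) := by
        rw [Matrix.mul_add, Matrix.mul_smul, blk_add, blk_smul,
          blk_transpose_mul, h2]
      rw [h3]
      exact hPSD ε hε hεe
    choose e he hPSD using hblocks
    have hTne : (Finset.univ : Finset (Fin T)).Nonempty := ⟨⟨0, hT⟩, Finset.mem_univ _⟩
    set ε := Finset.univ.inf' hTne e with hε
    have hε0 : 0 < ε := (Finset.lt_inf'_iff hTne).mpr fun t _ => he t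
    have hεle : ∀ t : Fin T, ε ≤ e t := fun t => Finset.inf'_le _ (Finset.mem_univ t)
    refine ⟨ε⁻¹, by positivity, (L + ε • W) * 1 - L, ?_, ?_⟩
    · exact ⟨L + ε • W, 1, memL_add hL (memL_smul ε hWL),
        one_mem_OStar _ _ (fun t => hPSD t ε hε0 (hεle t)), rfl⟩
    · rw [Matrix.mul_one, add_sub_cancel_left, smul_smul,
        inv_mul_cancel₀ (ne_of_gt hε0), one_smul]
  · rintro ⟨lam, hlam, V, hV, rfl⟩
    have hVcal := VSet_subset_calV hL hV
    refine ⟨memL_smul lam hVcal.1, fun t => ?_⟩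
    have h1 : blk ((lam • V)ᵀ * L) t = lam • blk (Vᵀ * L) t := by
      rw [Matrix.transpose_smul, Matrix.smul_mul, blk_smul]
    rw [h1]
    exact (hVcal.2 t).smul lam
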